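/- Let q be a prime power, l ≥ 1, t = q^l, and F = GF(t²) (so GF(q) ⊆ GF(t) ⊆ F). Let L = (α₁, …, αₙ) enumerate the set {α ∈ F : α ≠ 0 and α^t + α^{t−1} + 1 ≠ 0}. Then for every integer i with 1 ≤ i ≤ q−2 and every c ∈ GF(q)ⁿ: c belongs to Γ(L, (X^{t+1} + X^t + X)^i) if and only if c belongs to Γ(L, (X^t + X^{t−1} + 1)^i) and Σₖ cₖ · (αₖ^{t+1} + αₖ^t + αₖ)^{−i} = 0 in F. -/

import Mathlib

open Polynomial

/-- The syndrome polynomial `Σᵢ cᵢ ∏_{j≠i} (X − αⱼ)` of a word `c ∈ GF(q)ⁿ` with respect to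
the locator tuple `α`, with coefficients viewed in the extension field `F`. -/
noncomputable def goppaSum {K F : Type*} [Field K] [Field F] [Algebra K F] {n : ℕ}
    (α : Fin n → F) (c : Fin n → K) : Polynomial F :=
  ∑ i, Polynomial.C (algebraMap K F (c i)) *
    ∏ j ∈ Finset.univ.erase i, (Polynomial.X - Polynomial.C (α j))

open Finset in
private theorem goppa_master {F : Type*} [Field F] {n : ℕ}
    (α : Fin n → F) (d : Fin n → F) (G : Polynomial F)
    (hG : G.Monic) (hd : 1 ≤ G.natDegree) (he : ∀ k, G.eval (α k) ≠ 0) :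
    (G ∣ ∑ k, C (d k) * ∏ j ∈ Finset.univ.erase k, (X - C (α j))) ↔
      ∀ j < G.natDegree, ∑ k, d k * (G.eval (α k))⁻¹ * α k ^ j = 0 := by
  classical
  set S : Polynomial F := ∑ k, C (d k) * ∏ j ∈ Finset.univ.erase k, (X - C (α j)) with hS
  set e : Fin n → F := fun k => G.eval (α k) with he_def
  set Q : Fin n → Polynomial F := fun k => (G - C (e k)) /ₘ (X - C (α k)) with hQ_def
  have hQ : ∀ k, (X - C (α k)) * Q k = G - C (e k) := by
    intro k
    exact mul_divByMonic_eq_iff_isRoot.mpr (by simp [IsRoot, he_def])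
  set V : Polynomial F := ∑ k, C (d k * (e k)⁻¹) * Q k with hV
  set P : Polynomial F := ∏ k, (X - C (α k)) with hP
  have hG0 : 0 < G.degree := natDegree_pos_iff_degree_pos.mp hd
  have hGne : G ≠ 0 := hG.ne_zero
  -- key algebraic identity
  have key : S + P * V = G * ∑ k, C (d k * (e k)⁻¹) * ∏ j ∈ Finset.univ.erase k, (X - C (α j)) := by
    rw [hS, hV, Finset.mul_sum, Finset.mul_sum, ← Finset.sum_add_distrib]
    refine Finset.sum_congr rfl fun k _ => ?_
    have hPk : P = (X - C (α k)) * ∏ j ∈ Finset.univ.erase k, (X - C (α j)) :=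
      (Finset.mul_prod_erase _ _ (Finset.mem_univ k)).symm
    have hCe : C (d k * (e k)⁻¹) * C (e k) = C (d k) := by
      rw [← C_mul, mul_assoc, inv_mul_cancel₀ (he k), mul_one]
    rw [hPk]
    linear_combination (C (d k * (e k)⁻¹) * ∏ j ∈ Finset.univ.erase k, (X - C (α j))) * hQ k
      - (∏ j ∈ Finset.univ.erase k, (X - C (α j))) * hCe
  have hcop : IsCoprime G P := by
    refine IsCoprime.prod_right fun k _ => ?_
    refine (((irreducible_X_sub_C (α k)).coprime_iff_not_dvd).mpr ?_).symm
    intro hdvd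
    exact he k (dvd_iff_isRoot.mp hdvd)
  have hdvdPV : G ∣ S + P * V := ⟨_, key⟩
  have step2 : (G ∣ S) ↔ G ∣ V := by
    constructor
    · intro hs
      have h1 : G ∣ P * V := (dvd_add_right hs).mp hdvdPV
      exact hcop.dvd_of_dvd_mul_left h1
    · intro hv
      have h1 : G ∣ P * V := hv.mul_left P
      have := dvd_sub hdvdPV h1
      simpa using this
  -- degree bound
  have hdegQ : ∀ k, (Q k).degree < G.degree := by
    intro k
    have hne : G - C (e k) ≠ 0 := by
      intro habs
      have hGC : G = C (e k) := sub_eq_zero.mp habs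
      rw [hGC, natDegree_C] at hd
      exact Nat.not_succ_le_zero 0 hd
    have h1 : ((G - C (e k)) /ₘ (X - C (α k))).degree < (G - C (e k)).degree :=
      degree_divByMonic_lt _ _ hne (by rw [degree_X_sub_C]; exact zero_lt_one)
    rwa [degree_sub_C hG0] at h1
  have hdegV : V.degree < G.degree := by
    refine lt_of_le_of_lt (degree_sum_le _ _) ?_
    rw [Finset.sup_lt_iff (lt_of_lt_of_le (WithBot.bot_lt_coe 0) (le_of_lt hG0))]
    intro k _
    have hle : (C (d k * (e k)⁻¹) * Q k).degree ≤ (Q k).degree := by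
      refine (degree_mul_le _ _).trans ?_
      calc (C (d k * (e k)⁻¹)).degree + (Q k).degree ≤ 0 + (Q k).degree :=
            add_le_add_left degree_C_le _
        _ = (Q k).degree := zero_add _
    exact lt_of_le_of_lt hle (hdegQ k)
  have step4 : (G ∣ V) ↔ V = 0 := by
    constructor
    · intro hv
      by_contra hv0
      exact absurd (degree_le_of_dvd hv hv0) (not_le.mpr hdegV)
    · intro hv; rw [hv]; exact dvd_zero G
  -- coefficient formula
  have hVcoeff : ∀ j, V.coeff j = ∑ m ∈ Finset.Icc (j+1) G.natDegree,
      G.coeff m * ∑ k, d k * (e k)⁻¹ * α k ^ (m - (j+1)) := by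
    intro j
    rw [hV, finset_sum_coeff]
    have hterm : ∀ k, (C (d k * (e k)⁻¹) * Q k).coeff j
        = ∑ m ∈ Finset.Icc (j+1) G.natDegree, (d k * (e k)⁻¹ * α k ^ (m - (j+1))) * G.coeff m := by
      intro k
      rw [coeff_C_mul, hQ_def]
      simp only
      rw [coeff_divByMonic_X_sub_C, natDegree_sub_C, Finset.mul_sum]
      refine Finset.sum_congr rfl fun m hm => ?_
      have hm1 : m ≠ 0 := by
        have := (Finset.mem_Icc.mp hm).1; omega
      rw [coeff_sub, coeff_C, if_neg hm1, sub_zero]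
      ring
    rw [Finset.sum_congr rfl fun k _ => hterm k, Finset.sum_comm]
    refine Finset.sum_congr rfl fun m _ => ?_
    rw [Finset.mul_sum]
    refine Finset.sum_congr rfl fun k _ => ?_
    ring
  have step5 : V = 0 ↔ ∀ j < G.natDegree, ∑ k, d k * (e k)⁻¹ * α k ^ j = 0 := by
    constructor
    · intro hv0
      intro r hr
      induction r using Nat.strong_induction_on with
      | _ r ih =>
        have hc := hVcoeff (G.natDegree - 1 - r)
        rw [hv0, coeff_zero] at hc
        have hj1 : G.natDegree - 1 - r + 1 = G.natDegree - r := by omega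
        rw [hj1] at hc
        have hzero : ∀ m ∈ Finset.Icc (G.natDegree - r) G.natDegree, m ≠ G.natDegree →
            G.coeff m * ∑ k, d k * (e k)⁻¹ * α k ^ (m - (G.natDegree - r)) = 0 := by
          intro m hm hmne
          have hmm := Finset.mem_Icc.mp hm
          have h2 : m - (G.natDegree - r) < r := by omega
          rw [ih _ h2 (by omega), mul_zero]
        rw [Finset.sum_eq_single_of_mem G.natDegree
          (Finset.mem_Icc.mpr ⟨by omega, le_refl _⟩) hzero] at hc
        rw [hG.coeff_natDegree, one_mul] at hc
        have : G.natDegree - (G.natDegree - r) = r := by omega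
        rw [this] at hc
        exact hc.symm
    · intro hall
      ext j
      by_cases hj : j < G.natDegree
      · rw [hVcoeff j, coeff_zero]
        refine Finset.sum_eq_zero fun m hm => ?_
        have hmm := Finset.mem_Icc.mp hm
        rw [hall _ (by omega), mul_zero]
      · rw [coeff_zero]
        refine coeff_eq_zero_of_degree_lt (lt_of_lt_of_le hdegV ?_)
        rw [degree_eq_natDegree hGne]
        exact_mod_cast Nat.le_of_not_lt hj
  rw [step2, step4, step5]

/-- with `t = q^l`, `F = GF(t²)` and `L` enumerating
`{α ∈ F : α ≠ 0 ∧ α^t + α^{t−1} + 1 ≠ 0}`, for `1 ≤ i ≤ q − 2` a word `c` lies in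
`Γ(L, (X^{t+1} + X^t + X)^i)` iff it lies in `Γ(L, (X^t + X^{t−1} + 1)^i)` and satisfies
the extra parity check `Σₖ cₖ (αₖ^{t+1} + αₖ^t + αₖ)^{−i} = 0`. -/
theorem goppa_G5_iff_G4_and_check {K F : Type*} [Field K] [Fintype K]
    [Field F] [Fintype F] [Algebra K F]
    (q l : ℕ) (hq : Fintype.card K = q) (hl : 1 ≤ l)
    (hF : Fintype.card F = (q ^ l) ^ 2)
    {n : ℕ} (α : Fin n → F) (hα : Function.Injective α)
    (hrange : ∀ x : F, x ∈ Set.range α ↔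
      (x ≠ 0 ∧ x ^ (q ^ l) + x ^ (q ^ l - 1) + 1 ≠ 0))
    (i : ℕ) (hi1 : 1 ≤ i) (hi2 : i ≤ q - 2) (c : Fin n → K) :
    ((Polynomial.X ^ (q ^ l + 1) + Polynomial.X ^ (q ^ l) + Polynomial.X) ^ i ∣
        goppaSum α c) ↔
      (((Polynomial.X ^ (q ^ l) + Polynomial.X ^ (q ^ l - 1) + 1) ^ i ∣ goppaSum α c) ∧
        ∑ k, algebraMap K F (c k) *
          ((α k ^ (q ^ l + 1) + α k ^ (q ^ l) + α k) ^ i)⁻¹ = 0) := by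
  classical
  set t := q ^ l with ht_def
  have hq2 : 2 ≤ q := by rw [← hq]; exact Fintype.one_lt_card
  have hq3 : 3 ≤ q := by omega
  have hqt : q ≤ t := Nat.le_self_pow (by omega) q
  have ht3 : 3 ≤ t := le_trans hq3 hqt
  -- characteristic facts
  haveI : CharP K (ringChar K) := ringChar.charP K
  obtain ⟨m, hpp, hqpm⟩ := FiniteField.card K (ringChar K)
  rw [hq] at hqpm
  haveI : CharP F (ringChar K) := charP_of_injective_ringHom (algebraMap K F).injective _
  haveI : Fact (ringChar K).Prime := ⟨hpp⟩
  have htp : t = ringChar K ^ ((m : ℕ) * l) := by rw [ht_def, hqpm, ← pow_mul]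
  have hfrob : ∀ (f : Fin n → F), (∑ k, f k) ^ t = ∑ k, f k ^ t := by
    intro f; rw [htp]; exact sum_pow_char_pow (p := ringChar K) (n := ↑m * l) Finset.univ f
  have hadd : ∀ x y : F, (x + y) ^ t = x ^ t + y ^ t := by
    intro x y; rw [htp]; exact add_pow_char_pow x y (ringChar K) (↑m * l)
  have hFt : ∀ x : F, x ^ (t * t) = x := by
    intro x
    have h1 := FiniteField.pow_card x
    rw [hF] at h1
    rw [show t * t = (q ^ l) ^ 2 by rw [ht_def]; ring]
    exact h1
  have hKt : ∀ a : K, a ^ t = a := by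
    intro a
    have h1 := FiniteField.pow_card_pow l a
    rw [hq] at h1
    rw [ht_def]; exact h1
  -- per-coordinate facts
  have hαk : ∀ k, α k ≠ 0 := fun k => ((hrange (α k)).mp ⟨k, rfl⟩).1
  have hηk : ∀ k, α k ^ t + α k ^ (t-1) + 1 ≠ 0 := fun k => ((hrange (α k)).mp ⟨k, rfl⟩).2
  have hfac : ∀ k, α k ^ (t+1) + α k ^ t + α k = α k * (α k ^ t + α k ^ (t-1) + 1) := by
    intro k
    have h1 : t - 1 + 1 = t := by omega
    calc α k ^ (t+1) + α k ^ t + α k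
        = α k ^ (t+1) + α k ^ (t-1+1) + α k := by rw [h1]
      _ = α k * (α k ^ t + α k ^ (t-1) + 1) := by rw [pow_succ, pow_succ]; ring
  have hγk : ∀ k, α k ^ (t+1) + α k ^ t + α k ≠ 0 := fun k => by
    rw [hfac k]; exact mul_ne_zero (hαk k) (hηk k)
  have hγt : ∀ k, (α k ^ (t+1) + α k ^ t + α k) ^ t = α k ^ (t+1) + α k ^ t + α k := by
    intro k
    have h2 : (α k ^ t) ^ t = α k := by rw [← pow_mul, hFt]
    have h1 : (α k ^ (t+1)) ^ t = α k ^ (t+1) := by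
      rw [← pow_mul, show (t+1) * t = t*t + t by ring, pow_add, hFt, ← pow_succ']
    calc (α k ^ (t+1) + α k ^ t + α k) ^ t
        = (α k ^ (t+1)) ^ t + (α k ^ t) ^ t + α k ^ t := by rw [hadd, hadd]
      _ = α k ^ (t+1) + α k ^ t + α k := by rw [h1, h2]; ring
  -- the check sums
  have hAfrob : ∀ j : ℕ,
      (∑ k, algebraMap K F (c k) * ((α k ^ (t+1) + α k ^ t + α k) ^ i)⁻¹ * α k ^ j) ^ t
      = ∑ k, algebraMap K F (c k) * ((α k ^ (t+1) + α k ^ t + α k) ^ i)⁻¹ * α k ^ (j * t) := by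
    intro j
    rw [hfrob]
    refine Finset.sum_congr rfl fun k _ => ?_
    have h1 : (algebraMap K F (c k)) ^ t = algebraMap K F (c k) := by rw [← map_pow, hKt]
    have h2 : (((α k ^ (t+1) + α k ^ t + α k) ^ i)⁻¹) ^ t
        = ((α k ^ (t+1) + α k ^ t + α k) ^ i)⁻¹ := by
      rw [inv_pow, pow_right_comm, hγt]
    rw [mul_pow, mul_pow, h1, h2, ← pow_mul]
  -- polynomials
  have hS : goppaSum α c = ∑ k, C (algebraMap K F (c k)) *
      ∏ j ∈ Finset.univ.erase k, (X - C (α j)) := rfl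
  have hmg : ((X : Polynomial F) ^ (t+1) + X ^ t + X).Monic := by
    rw [add_assoc]
    refine monic_X_pow_add ?_
    refine lt_of_le_of_lt (degree_add_le _ _) ?_
    rw [degree_X_pow, degree_X, max_lt_iff]
    constructor <;> exact_mod_cast by omega
  have hmh : ((X : Polynomial F) ^ t + X ^ (t-1) + 1).Monic := by
    rw [add_assoc]
    refine monic_X_pow_add ?_
    refine lt_of_le_of_lt (degree_add_le _ _) ?_
    rw [degree_X_pow, degree_one, max_lt_iff]
    constructor <;> exact_mod_cast by omega
  have hdg : ((X : Polynomial F) ^ (t+1) + X ^ t + X).natDegree = t + 1 := by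
    refine natDegree_eq_of_degree_eq_some ?_
    rw [add_assoc]
    rw [degree_add_eq_left_of_degree_lt, degree_X_pow]
    refine lt_of_le_of_lt (degree_add_le _ _) ?_
    rw [degree_X_pow, degree_X, degree_X_pow, max_lt_iff]
    constructor <;> exact_mod_cast by omega
  have hdh : ((X : Polynomial F) ^ t + X ^ (t-1) + 1).natDegree = t := by
    refine natDegree_eq_of_degree_eq_some ?_
    rw [add_assoc]
    rw [degree_add_eq_left_of_degree_lt, degree_X_pow]
    refine lt_of_le_of_lt (degree_add_le _ _) ?_
    rw [degree_X_pow, degree_one, degree_X_pow, max_lt_iff]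
    constructor <;> exact_mod_cast by omega
  have hevg : ∀ k, eval (α k) (((X : Polynomial F) ^ (t+1) + X ^ t + X) ^ i)
      = (α k ^ (t+1) + α k ^ t + α k) ^ i := by
    intro k; rw [eval_pow]; congr 1; simp
  have hevh : ∀ k, eval (α k) (((X : Polynomial F) ^ t + X ^ (t-1) + 1) ^ i)
      = (α k ^ t + α k ^ (t-1) + 1) ^ i := by
    intro k; rw [eval_pow]; congr 1; simp
  -- master for g^i
  have hA1 : (((X : Polynomial F) ^ (t+1) + X ^ t + X) ^ i ∣ goppaSum α c) ↔
      ∀ j < i * (t+1), ∑ k, algebraMap K F (c k) *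
        ((α k ^ (t+1) + α k ^ t + α k) ^ i)⁻¹ * α k ^ j = 0 := by
    have hm := goppa_master α (fun k => algebraMap K F (c k))
      (((X : Polynomial F) ^ (t+1) + X ^ t + X) ^ i) (hmg.pow i)
      (by rw [natDegree_pow, hdg]; exact Nat.one_le_iff_ne_zero.mpr (Nat.mul_ne_zero (by omega) (by omega)))
      (by intro k; rw [hevg k]; exact pow_ne_zero _ (hγk k))
    rw [natDegree_pow, hdg] at hm
    simp only [hevg] at hm
    rw [hS]
    exact hm
  -- master for h^i
  have hA2 : (((X : Polynomial F) ^ t + X ^ (t-1) + 1) ^ i ∣ goppaSum α c) ↔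
      ∀ j < i * t, ∑ k, algebraMap K F (c k) *
        ((α k ^ (t+1) + α k ^ t + α k) ^ i)⁻¹ * α k ^ (j + i) = 0 := by
    have hm := goppa_master α (fun k => algebraMap K F (c k))
      (((X : Polynomial F) ^ t + X ^ (t-1) + 1) ^ i) (hmh.pow i)
      (by rw [natDegree_pow, hdh]; exact Nat.one_le_iff_ne_zero.mpr (Nat.mul_ne_zero (by omega) (by omega)))
      (by intro k; rw [hevh k]; exact pow_ne_zero _ (hηk k))
    rw [natDegree_pow, hdh] at hm
    simp only [hevh] at hm
    rw [hS]
    rw [hm]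
    apply forall_congr'; intro j
    apply imp_congr Iff.rfl
    have hconv : ∀ k, algebraMap K F (c k) * ((α k ^ t + α k ^ (t-1) + 1) ^ i)⁻¹ * α k ^ j
        = algebraMap K F (c k) * ((α k ^ (t+1) + α k ^ t + α k) ^ i)⁻¹ * α k ^ (j + i) := by
      intro k
      have h1 := hαk k
      have h2 := hηk k
      have h3 := pow_ne_zero i h1
      have h4 := pow_ne_zero i h2
      rw [hfac k, mul_pow, pow_add, mul_inv]
      field_simp
    constructor <;> intro hsum <;> rw [← hsum] <;>
      exact Finset.sum_congr rfl fun k _ => (hconv k).symm ▸ rfl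
  -- g^i = h^i * X^i
  have hghpow : ((X : Polynomial F) ^ (t+1) + X ^ t + X) ^ i
      = ((X : Polynomial F) ^ t + X ^ (t-1) + 1) ^ i * X ^ i := by
    rw [← mul_pow]
    congr 1
    have h1 : t - 1 + 1 = t := by omega
    calc (X : Polynomial F) ^ (t+1) + X ^ t + X
        = (X : Polynomial F) ^ (t+1) + X ^ (t-1+1) + X := by rw [h1]
      _ = ((X : Polynomial F) ^ t + X ^ (t-1) + 1) * X := by rw [pow_succ, pow_succ]; ring
  -- assembly
  have hsplit : i * (t+1) = i * t + i := by ring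
  constructor
  · intro hg
    have hdvd_h : ((X : Polynomial F) ^ t + X ^ (t-1) + 1) ^ i ∣ goppaSum α c :=
      dvd_trans ⟨X ^ i, hghpow⟩ hg
    refine ⟨hdvd_h, ?_⟩
    have h0 := (hA1.mp hg) 0 (Nat.mul_pos (by omega) (by omega))
    simpa using h0
  · rintro ⟨hh, hcheck⟩
    refine hA1.mpr ?_
    intro j hj
    have hA2' := hA2.mp hh
    rcases Nat.lt_or_ge j i with hji | hji
    · rcases Nat.eq_zero_or_pos j with hj0 | hj0
      · subst hj0
        simpa using hcheck
      · -- 1 ≤ j < i : use Frobenius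
        have hjt_ge : i ≤ j * t := by
          have h1 : t ≤ j * t := Nat.le_mul_of_pos_left t hj0
          omega
        have hjt_le : j * t + t ≤ i * t := by
          have h1 : (j + 1) * t ≤ i * t := Nat.mul_le_mul_right t (by omega)
          rw [add_mul, one_mul] at h1
          exact h1
        have h3 := hA2' (j * t - i) (by omega)
        rw [show j * t - i + i = j * t by omega] at h3
        have h4 := (hAfrob j).trans h3
        exact pow_eq_zero_iff (by omega : t ≠ 0) |>.mp h4
    · have h3 := hA2' (j - i) (by omega)
      rw [show j - i + i = j by omega] at h3
      exact h3
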